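/- Let G be a finite simple graph, let uv ∈ E(G), and let H be obtained from G by subdividing the edge uv exactly four times, with new path u, e_1, e_2, e_3, e_4, v. Then from any total dominating set D' of H one can construct a total dominating set D of G with |D| ≤ |D'| − 2. In particular, γ_t(G) ≤ γ_t(H) − 2. -/
import Mathlib


open SimpleGraph

/-- `D` is a total dominating set of `G`: every vertex has a neighbour in `D`. -/
def IsTotalDomSet {V : Type*} (G : SimpleGraph V) (D : Set V) : Prop :=
  ∀ v : V, ∃ u ∈ D, G.Adj u v

/-- `x` and `y` are (distinct or not) at distance at most two:
adjacent or joined through a common neighbour. -/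
def WithinTwo {V : Type*} (G : SimpleGraph V) (x y : V) : Prop :=
  G.Adj x y ∨ ∃ z, G.Adj x z ∧ G.Adj z y

/-- `x` and `y` are at distance exactly two. -/
def DistTwo {V : Type*} (G : SimpleGraph V) (x y : V) : Prop :=
  x ≠ y ∧ ¬ G.Adj x y ∧ ∃ z, G.Adj x z ∧ G.Adj z y

/-- `D` is a semitotal dominating set of `G`: a dominating set in which every
vertex of `D` has another vertex of `D` within distance two (a witness). -/
def IsSemitotalDomSet {V : Type*} (G : SimpleGraph V) (D : Set V) : Prop :=
  (∀ v : V, v ∉ D → ∃ u ∈ D, G.Adj u v) ∧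
  (∀ x ∈ D, ∃ y ∈ D, y ≠ x ∧ WithinTwo G x y)

/-- The total domination number `γ_t`. -/
noncomputable def totalDomNum {V : Type*} (G : SimpleGraph V) [Fintype V] : ℕ :=
  sInf {n | ∃ D : Set V, IsTotalDomSet G D ∧ D.ncard = n}

/-- The semitotal domination number `γ_{t2}`. -/
noncomputable def semitotalDomNum {V : Type*} (G : SimpleGraph V) [Fintype V] : ℕ :=
  sInf {n | ∃ D : Set V, IsSemitotalDomSet G D ∧ D.ncard = n}

/-- The graph obtained from `G` by contracting the edge `xy`:
delete `y` and merge it into `x`. -/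
def contractEdge {V : Type*} (G : SimpleGraph V) (x y : V) :
    SimpleGraph {v : V // v ≠ y} :=
  SimpleGraph.fromRel (fun a b =>
    G.Adj a.1 b.1 ∨ (a.1 = x ∧ G.Adj y b.1) ∨ (b.1 = x ∧ G.Adj y a.1))

/-- A bundled finite simple graph. -/
structure FGraph : Type 1 where
  V : Type
  fin : Fintype V
  G : SimpleGraph V

attribute [instance] FGraph.fin

noncomputable def FGraph.tdn (A : FGraph) : ℕ := totalDomNum A.G

noncomputable def FGraph.stdn (A : FGraph) : ℕ := semitotalDomNum A.G

/-- `B` is obtained from `A` by contracting a single edge. -/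
def FGraph.Contract (A B : FGraph) : Prop :=
  ∃ x y : A.V, A.G.Adj x y ∧ ∃ e : B.V ≃ {v : A.V // v ≠ y},
    ∀ a b : B.V, B.G.Adj a b ↔ (contractEdge A.G x y).Adj (e a) (e b)

/-- `B` is obtained from `A` by a sequence of `n` edge contractions. -/
inductive ContractStar : ℕ → FGraph → FGraph → Prop
  | refl (A : FGraph) : ContractStar 0 A A
  | step {n : ℕ} {A B C : FGraph} : A.Contract B → ContractStar n B C →
      ContractStar (n + 1) A C

/-- At most `k` edge contractions suffice to decrease the total domination number by one. -/
def ctTDLe (A : FGraph) (k : ℕ) : Prop :=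
  ∃ n ≤ k, ∃ B : FGraph, ContractStar n A B ∧ B.tdn = A.tdn - 1

/-- At most `k` edge contractions suffice to decrease the semitotal domination number by one. -/
def ctSTLe (A : FGraph) (k : ℕ) : Prop :=
  ∃ n ≤ k, ∃ B : FGraph, ContractStar n A B ∧ B.stdn = A.stdn - 1

/-- `ct_{γ_t}`: the minimum number of edge contractions needed to decrease `γ_t` by one. -/
noncomputable def ctTDNum (A : FGraph) : ℕ :=
  sInf {n | ∃ B : FGraph, ContractStar n A B ∧ B.tdn = A.tdn - 1}

/-- `ct_{γ_{t2}}`: the minimum number of edge contractions needed to decrease `γ_{t2}` by one. -/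
noncomputable def ctSTNum (A : FGraph) : ℕ :=
  sInf {n | ∃ B : FGraph, ContractStar n A B ∧ B.stdn = A.stdn - 1}

/-- Disjoint union of two simple graphs. -/
def disjGraphUnion {α β : Type*} (G : SimpleGraph α) (H : SimpleGraph β) :
    SimpleGraph (α ⊕ β) :=
  SimpleGraph.fromRel (fun a b =>
    match a, b with
    | Sum.inl a, Sum.inl b => G.Adj a b
    | Sum.inr a, Sum.inr b => H.Adj a b
    | _, _ => False)

/-- The graph obtained from `G` by subdividing the edge `uv` exactly four times:
`uv` is replaced by the path `u, e₀, e₁, e₂, e₃, v`. -/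
def subdivide4 {V : Type*} (G : SimpleGraph V) (u v : V) :
    SimpleGraph (V ⊕ Fin 4) :=
  SimpleGraph.fromRel (fun a b =>
    match a, b with
    | Sum.inl a, Sum.inl b => G.Adj a b ∧ ¬((a = u ∧ b = v) ∨ (a = v ∧ b = u))
    | Sum.inl a, Sum.inr i => (a = u ∧ i = 0) ∨ (a = v ∧ i = 3)
    | Sum.inr i, Sum.inr j => (i : ℕ) + 1 = (j : ℕ)
    | _, _ => False)

section Aux

variable {V : Type*} (G : SimpleGraph V) (u v : V)

lemma adj_ll {a b : V} : (subdivide4 G u v).Adj (Sum.inl a) (Sum.inl b) ↔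
    G.Adj a b ∧ ¬((a = u ∧ b = v) ∨ (a = v ∧ b = u)) := by
  simp only [subdivide4, SimpleGraph.fromRel_adj]
  constructor
  · rintro ⟨hne, h | h⟩
    · exact h
    · exact ⟨h.1.symm, fun hc => h.2 (by tauto)⟩
  · rintro ⟨h1, h2⟩
    exact ⟨by simp [h1.ne], Or.inl ⟨h1, h2⟩⟩

lemma adj_lr {a : V} {i : Fin 4} : (subdivide4 G u v).Adj (Sum.inl a) (Sum.inr i) ↔
    (a = u ∧ i = 0) ∨ (a = v ∧ i = 3) := by
  simp only [subdivide4, SimpleGraph.fromRel_adj]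
  constructor
  · rintro ⟨hne, h | h⟩
    · exact h
    · exact h.elim
  · intro h; exact ⟨by simp, Or.inl h⟩

lemma adj_rr {i j : Fin 4} : (subdivide4 G u v).Adj (Sum.inr i) (Sum.inr j) ↔
    ((i : ℕ) + 1 = (j : ℕ) ∨ (j : ℕ) + 1 = (i : ℕ)) := by
  simp only [subdivide4, SimpleGraph.fromRel_adj]
  constructor
  · rintro ⟨hne, h⟩; exact h
  · intro h
    refine ⟨fun hc => ?_, h⟩
    have : i = j := by simpa using hc
    subst this; omega

lemma count8 {V : Type*} [Fintype V] (D' : Set (V ⊕ Fin 4)) (D₀ : Set V)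
    (hD₀ : D₀ = Sum.inl ⁻¹' D') (T : Set V) (S : Finset (Fin 4))
    (hS : ∀ i ∈ S, Sum.inr i ∈ D')
    (hT : (T \ D₀).ncard + 2 ≤ S.card) :
    (D₀ ∪ T).ncard ≤ D'.ncard - 2 := by
  subst hD₀
  set D₀ : Set V := Sum.inl ⁻¹' D' with hD₀def
  have h1 : (D₀ ∪ T).ncard ≤ D₀.ncard + (T \ D₀).ncard := by
    rw [show D₀ ∪ T = D₀ ∪ (T \ D₀) by rw [Set.union_diff_self]]
    exact Set.ncard_union_le _ _
  have h2 : (Sum.inl '' D₀ ∪ Sum.inr '' (S : Set (Fin 4))).ncard ≤ D'.ncard := by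
    apply Set.ncard_le_ncard _ (Set.toFinite _)
    rintro x (⟨a, ha, rfl⟩ | ⟨i, hi, rfl⟩)
    · exact ha
    · exact hS i (by simpa using hi)
  have h3 : (Sum.inl '' D₀ ∪ Sum.inr '' (S : Set (Fin 4))).ncard = D₀.ncard + S.card := by
    rw [Set.ncard_union_eq ?_ (Set.toFinite _) (Set.toFinite _),
      Set.ncard_image_of_injective _ Sum.inl_injective,
      Set.ncard_image_of_injective _ Sum.inr_injective, Set.ncard_coe_finset]
    rw [Set.disjoint_left]
    rintro x ⟨a, _, rfl⟩ ⟨i, _, h⟩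
    simp at h
  omega

end Aux
/-- From any total dominating set `D'` of the 4-subdivision `H` of `G` along an
edge `uv` one can construct a total dominating set `D` of `G` with
`|D| ≤ |D'| − 2`; in particular `γ_t(G) ≤ γ_t(H) − 2`. -/
theorem stmt8 {V : Type*} [Fintype V] (G : SimpleGraph V) (u v : V)
    (huv : G.Adj u v) :
    (∀ D' : Set (V ⊕ Fin 4), IsTotalDomSet (subdivide4 G u v) D' →
      ∃ D : Set V, IsTotalDomSet G D ∧ D.ncard ≤ D'.ncard - 2) ∧
    totalDomNum G ≤ totalDomNum (subdivide4 G u v) - 2 := by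
  classical
  have hne_uv : u ≠ v := G.ne_of_adj huv
  have main : ∀ D' : Set (V ⊕ Fin 4), IsTotalDomSet (subdivide4 G u v) D' →
      ∃ D : Set V, IsTotalDomSet G D ∧ D.ncard ≤ D'.ncard - 2 := by
    intro D' hD'
    set D₀ : Set V := Sum.inl ⁻¹' D' with hD₀def
    have hdom : ∀ w : V, (∃ b ∈ D₀, G.Adj b w) ∨
        (w = u ∧ Sum.inr 0 ∈ D') ∨ (w = v ∧ Sum.inr 3 ∈ D') := by
      intro w
      obtain ⟨x, hx, hadj⟩ := hD' (Sum.inl w)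
      rcases x with b | i
      · rw [adj_ll] at hadj
        exact Or.inl ⟨b, hx, hadj.1⟩
      · rw [SimpleGraph.adj_comm, adj_lr] at hadj
        rcases hadj with ⟨rfl, rfl⟩ | ⟨rfl, rfl⟩
        · exact Or.inr (Or.inl ⟨rfl, hx⟩)
        · exact Or.inr (Or.inr ⟨rfl, hx⟩)
    have hw : ∀ w : V, w ≠ u → w ≠ v → ∃ b ∈ D₀, G.Adj b w := by
      intro w h1 h2
      rcases hdom w with h | ⟨rfl, _⟩ | ⟨rfl, _⟩
      · exact h
      · exact absurd rfl h1
      · exact absurd rfl h2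
    have hu' : (∃ b ∈ D₀, G.Adj b u) ∨ Sum.inr 0 ∈ D' := by
      rcases hdom u with h | ⟨_, h⟩ | ⟨he, _⟩
      · exact Or.inl h
      · exact Or.inr h
      · exact absurd he hne_uv
    have hv' : (∃ b ∈ D₀, G.Adj b v) ∨ Sum.inr 3 ∈ D' := by
      rcases hdom v with h | ⟨he, _⟩ | ⟨_, h⟩
      · exact Or.inl h
      · exact absurd he hne_uv.symm
      · exact Or.inr h
    have hP1 : Sum.inr 0 ∈ D' ∨ Sum.inr 2 ∈ D' := by
      obtain ⟨x, hx, hadj⟩ := hD' (Sum.inr 1)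
      rcases x with b | i
      · rw [adj_lr] at hadj
        rcases hadj with ⟨_, h⟩ | ⟨_, h⟩ <;> exact absurd h (by decide)
      · rw [adj_rr] at hadj
        fin_cases i <;>
          first
            | exact Or.inl hx
            | exact Or.inr hx
            | exact absurd hadj (by decide)
    have hP2 : Sum.inr 1 ∈ D' ∨ Sum.inr 3 ∈ D' := by
      obtain ⟨x, hx, hadj⟩ := hD' (Sum.inr 2)
      rcases x with b | i
      · rw [adj_lr] at hadj
        rcases hadj with ⟨_, h⟩ | ⟨_, h⟩ <;> exact absurd h (by decide)
      · rw [adj_rr] at hadj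
        fin_cases i <;>
          first
            | exact Or.inl hx
            | exact Or.inr hx
            | exact absurd hadj (by decide)
    have hP0 : u ∈ D₀ ∨ Sum.inr 1 ∈ D' := by
      obtain ⟨x, hx, hadj⟩ := hD' (Sum.inr 0)
      rcases x with b | i
      · rw [adj_lr] at hadj
        rcases hadj with ⟨rfl, _⟩ | ⟨_, h⟩
        · exact Or.inl hx
        · exact absurd h (by decide)
      · rw [adj_rr] at hadj
        fin_cases i <;>
          first
            | exact Or.inr hx
            | exact absurd hadj (by decide)
    have hP3 : v ∈ D₀ ∨ Sum.inr 2 ∈ D' := by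
      obtain ⟨x, hx, hadj⟩ := hD' (Sum.inr 3)
      rcases x with b | i
      · rw [adj_lr] at hadj
        rcases hadj with ⟨_, h⟩ | ⟨rfl, _⟩
        · exact absurd h (by decide)
        · exact Or.inl hx
      · rw [adj_rr] at hadj
        fin_cases i <;>
          first
            | exact Or.inr hx
            | exact absurd hadj (by decide)
    have tds : ∀ T : Set V, (v ∈ T ∨ ∃ b ∈ D₀, G.Adj b u) →
        (u ∈ T ∨ ∃ b ∈ D₀, G.Adj b v) → IsTotalDomSet G (D₀ ∪ T) := by
      intro T hTu hTv w
      by_cases hwu : w = u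
      · subst hwu
        rcases hTu with h | ⟨b, hb, hadj⟩
        · exact ⟨v, Or.inr h, huv.symm⟩
        · exact ⟨b, Or.inl hb, hadj⟩
      by_cases hwv : w = v
      · subst hwv
        rcases hTv with h | ⟨b, hb, hadj⟩
        · exact ⟨u, Or.inr h, huv⟩
        · exact ⟨b, Or.inl hb, hadj⟩
      obtain ⟨b, hb, hadj⟩ := hw w hwu hwv
      exact ⟨b, Or.inl hb, hadj⟩
    have hdiff_u : u ∈ D₀ → ({u} : Set V) \ D₀ = ∅ := fun h =>
      Set.diff_eq_empty.mpr (Set.singleton_subset_iff.mpr h)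
    have hdiff_v : v ∈ D₀ → ({v} : Set V) \ D₀ = ∅ := fun h =>
      Set.diff_eq_empty.mpr (Set.singleton_subset_iff.mpr h)
    have hdiff_uv : u ∈ D₀ → v ∈ D₀ → ({u, v} : Set V) \ D₀ = ∅ := fun h1 h2 =>
      Set.diff_eq_empty.mpr (by rw [Set.insert_subset_iff, Set.singleton_subset_iff]; exact ⟨h1, h2⟩)
    have hcard_u : (({u} : Set V) \ D₀).ncard ≤ 1 :=
      le_trans (Set.ncard_le_ncard Set.diff_subset (Set.toFinite _)) (by simp)
    have hcard_v : (({v} : Set V) \ D₀).ncard ≤ 1 :=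
      le_trans (Set.ncard_le_ncard Set.diff_subset (Set.toFinite _)) (by simp)
    have hcard_uv : (({u, v} : Set V) \ D₀).ncard ≤ 2 :=
      le_trans (Set.ncard_le_ncard Set.diff_subset (Set.toFinite _))
        (le_trans (Set.ncard_insert_le u {v}) (by simp))
    have hsub_v : u ∈ D₀ → (({u, v} : Set V) \ D₀).ncard ≤ 1 := by
      intro h
      refine le_trans (Set.ncard_le_ncard ?_ (Set.toFinite _)) (le_of_eq (Set.ncard_singleton v))
      rintro x ⟨hx, hnx⟩
      rcases hx with rfl | hx
      · exact absurd h hnx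
      · exact hx
    have hsub_u : v ∈ D₀ → (({u, v} : Set V) \ D₀).ncard ≤ 1 := by
      intro h
      refine le_trans (Set.ncard_le_ncard ?_ (Set.toFinite _)) (le_of_eq (Set.ncard_singleton u))
      rintro x ⟨hx, hnx⟩
      rcases hx with rfl | hx
      · rfl
      · exact absurd (hx.symm ▸ h) hnx
    by_cases hu : ∃ b ∈ D₀, G.Adj b u
    · by_cases hv : ∃ b ∈ D₀, G.Adj b v
      · -- both u and v dominated by D₀
        refine ⟨D₀ ∪ ∅, tds ∅ (Or.inr hu) (Or.inr hv), ?_⟩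
        rcases hP1 with ha | ha <;> rcases hP2 with hb | hb
        · exact count8 D' D₀ hD₀def ∅ {0, 1} (by intro i hi; fin_cases hi; exacts [ha, hb])
            (by rw [Set.empty_diff, Set.ncard_empty]; decide)
        · exact count8 D' D₀ hD₀def ∅ {0, 3} (by intro i hi; fin_cases hi; exacts [ha, hb])
            (by rw [Set.empty_diff, Set.ncard_empty]; decide)
        · exact count8 D' D₀ hD₀def ∅ {1, 2} (by intro i hi; fin_cases hi; exacts [hb, ha])
            (by rw [Set.empty_diff, Set.ncard_empty]; decide)
        · exact count8 D' D₀ hD₀def ∅ {2, 3} (by intro i hi; fin_cases hi; exacts [ha, hb])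
            (by rw [Set.empty_diff, Set.ncard_empty]; decide)
      · -- u dominated, v not: add u
        have h3' : Sum.inr 3 ∈ D' := hv'.resolve_left hv
        refine ⟨D₀ ∪ {u}, tds {u} (Or.inr hu) (Or.inl rfl), ?_⟩
        by_cases hu0 : u ∈ D₀
        · rcases hP1 with ha | ha
          · exact count8 D' D₀ hD₀def {u} {0, 3} (by intro i hi; fin_cases hi; exacts [ha, h3'])
              (by rw [hdiff_u hu0, Set.ncard_empty]; decide)
          · exact count8 D' D₀ hD₀def {u} {2, 3} (by intro i hi; fin_cases hi; exacts [ha, h3'])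
              (by rw [hdiff_u hu0, Set.ncard_empty]; decide)
        · have h1' : Sum.inr 1 ∈ D' := hP0.resolve_left hu0
          rcases hP1 with ha | ha
          · refine count8 D' D₀ hD₀def {u} {0, 1, 3}
              (by intro i hi; fin_cases hi; exacts [ha, h1', h3']) ?_
            have : ({0, 1, 3} : Finset (Fin 4)).card = 3 := by decide
            omega
          · refine count8 D' D₀ hD₀def {u} {1, 2, 3}
              (by intro i hi; fin_cases hi; exacts [h1', ha, h3']) ?_
            have : ({1, 2, 3} : Finset (Fin 4)).card = 3 := by decide
            omega
    · by_cases hv : ∃ b ∈ D₀, G.Adj b v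
      · -- v dominated, u not: add v
        have h0' : Sum.inr 0 ∈ D' := hu'.resolve_left hu
        refine ⟨D₀ ∪ {v}, tds {v} (Or.inl rfl) (Or.inr hv), ?_⟩
        by_cases hv0 : v ∈ D₀
        · rcases hP2 with hb | hb
          · exact count8 D' D₀ hD₀def {v} {0, 1} (by intro i hi; fin_cases hi; exacts [h0', hb])
              (by rw [hdiff_v hv0, Set.ncard_empty]; decide)
          · exact count8 D' D₀ hD₀def {v} {0, 3} (by intro i hi; fin_cases hi; exacts [h0', hb])
              (by rw [hdiff_v hv0, Set.ncard_empty]; decide)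
        · have h2' : Sum.inr 2 ∈ D' := hP3.resolve_left hv0
          rcases hP2 with hb | hb
          · refine count8 D' D₀ hD₀def {v} {0, 1, 2}
              (by intro i hi; fin_cases hi; exacts [h0', hb, h2']) ?_
            have : ({0, 1, 2} : Finset (Fin 4)).card = 3 := by decide
            omega
          · refine count8 D' D₀ hD₀def {v} {0, 2, 3}
              (by intro i hi; fin_cases hi; exacts [h0', h2', hb]) ?_
            have : ({0, 2, 3} : Finset (Fin 4)).card = 3 := by decide
            omega
      · -- neither dominated: add both
        have h0' : Sum.inr 0 ∈ D' := hu'.resolve_left hu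
        have h3' : Sum.inr 3 ∈ D' := hv'.resolve_left hv
        refine ⟨D₀ ∪ {u, v}, tds {u, v} (Or.inl (by simp)) (Or.inl (by simp)), ?_⟩
        by_cases hu0 : u ∈ D₀ <;> by_cases hv0 : v ∈ D₀
        · exact count8 D' D₀ hD₀def {u, v} {0, 3}
            (by intro i hi; fin_cases hi; exacts [h0', h3'])
            (by rw [hdiff_uv hu0 hv0, Set.ncard_empty]; decide)
        · have h2' : Sum.inr 2 ∈ D' := hP3.resolve_left hv0
          refine count8 D' D₀ hD₀def {u, v} {0, 2, 3}
            (by intro i hi; fin_cases hi; exacts [h0', h2', h3']) ?_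
          have h := hsub_v hu0
          have : ({0, 2, 3} : Finset (Fin 4)).card = 3 := by decide
          omega
        · have h1' : Sum.inr 1 ∈ D' := hP0.resolve_left hu0
          refine count8 D' D₀ hD₀def {u, v} {0, 1, 3}
            (by intro i hi; fin_cases hi; exacts [h0', h1', h3']) ?_
          have h := hsub_u hv0
          have : ({0, 1, 3} : Finset (Fin 4)).card = 3 := by decide
          omega
        · have h1' : Sum.inr 1 ∈ D' := hP0.resolve_left hu0
          have h2' : Sum.inr 2 ∈ D' := hP3.resolve_left hv0
          refine count8 D' D₀ hD₀def {u, v} {0, 1, 2, 3}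
            (by intro i hi; fin_cases hi; exacts [h0', h1', h2', h3']) ?_
          have : ({0, 1, 2, 3} : Finset (Fin 4)).card = 4 := by decide
          omega
  refine ⟨main, ?_⟩
  by_cases hne : {n | ∃ D' : Set (V ⊕ Fin 4),
      IsTotalDomSet (subdivide4 G u v) D' ∧ D'.ncard = n}.Nonempty
  · obtain ⟨D', hD', hcard⟩ := Nat.sInf_mem hne
    obtain ⟨D, hD, hle⟩ := main D' hD'
    calc totalDomNum G ≤ D.ncard := Nat.sInf_le ⟨D, hD, rfl⟩
      _ ≤ D'.ncard - 2 := hle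
      _ = totalDomNum (subdivide4 G u v) - 2 := by rw [totalDomNum, hcard]
  · have gto_h : ∀ D : Set V, IsTotalDomSet G D →
        IsTotalDomSet (subdivide4 G u v) (Sum.inl '' D ∪ Set.range Sum.inr) := by
      intro D hD x
      rcases x with w | i
      · obtain ⟨b, hb, hadj⟩ := hD w
        by_cases hc : (b = u ∧ w = v) ∨ (b = v ∧ w = u)
        · rcases hc with ⟨rfl, rfl⟩ | ⟨rfl, rfl⟩
          · exact ⟨Sum.inr 3, Or.inr ⟨3, rfl⟩,
              by rw [SimpleGraph.adj_comm, adj_lr]; exact Or.inr ⟨rfl, rfl⟩⟩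
          · exact ⟨Sum.inr 0, Or.inr ⟨0, rfl⟩,
              by rw [SimpleGraph.adj_comm, adj_lr]; exact Or.inl ⟨rfl, rfl⟩⟩
        · exact ⟨Sum.inl b, Or.inl ⟨b, hb, rfl⟩, by rw [adj_ll]; exact ⟨hadj, hc⟩⟩
      · fin_cases i
        · exact ⟨Sum.inr 1, Or.inr ⟨1, rfl⟩, by rw [adj_rr]; decide⟩
        · exact ⟨Sum.inr 0, Or.inr ⟨0, rfl⟩, by rw [adj_rr]; decide⟩
        · exact ⟨Sum.inr 1, Or.inr ⟨1, rfl⟩, by rw [adj_rr]; decide⟩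
        · exact ⟨Sum.inr 2, Or.inr ⟨2, rfl⟩, by rw [adj_rr]; decide⟩
    rw [Set.not_nonempty_iff_eq_empty] at hne
    have hH : totalDomNum (subdivide4 G u v) = 0 := by
      rw [totalDomNum, hne, Nat.sInf_empty]
    have hG : totalDomNum G = 0 := by
      rw [totalDomNum, Nat.sInf_eq_zero]
      right
      rw [Set.eq_empty_iff_forall_notMem]
      rintro n ⟨D, hD, rfl⟩
      exact Set.eq_empty_iff_forall_notMem.mp hne _ ⟨_, gto_h D hD, rfl⟩
    rw [hG, hH]
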